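/- Let s, σ ∈ ℂ with s ≠ 0 and s + σ ≠ 0. Suppose U, Φ, Υ : ℝ → ℂ are functions with U twice differentiable on ℝ such that for all x ∈ ℝ: (s + σ) Φ(x) = −U′(x), (s + σ) Υ(x) = −σ² Φ′(x), and s² U(x) − U″(x) = Υ(x) + 2σ Φ′(x). Then the auxiliary variables can be eliminated and U satisfies the stretched Helmholtz-type equation s² U(x) = (1 + σ/s)^{−2} U″(x) for all x ∈ ℝ. -/

import Mathlib

/-- elimination of the auxiliary variables in the Laplace-transformed
continuous-limit RDPML system, yielding the stretched Helmholtz-type equation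
`s² U = (1 + σ/s)⁻² U″`. -/
theorem stmt19 (s σ : ℂ) (hs : s ≠ 0) (hsσ : s + σ ≠ 0)
    (U Φ Υ : ℝ → ℂ)
    (hU1 : Differentiable ℝ U) (hU2 : Differentiable ℝ (deriv U))
    (hΦ : ∀ x : ℝ, (s + σ) * Φ x = -deriv U x)
    (hΥ : ∀ x : ℝ, (s + σ) * Υ x = -σ ^ 2 * deriv Φ x)
    (hwave : ∀ x : ℝ, s ^ 2 * U x - deriv (deriv U) x = Υ x + 2 * σ * deriv Φ x) :
    ∀ x : ℝ, s ^ 2 * U x = ((1 + σ / s) ^ 2)⁻¹ * deriv (deriv U) x := by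
  have hfun : Φ = fun x => -(s + σ)⁻¹ * deriv U x := by
    funext x
    have h := hΦ x
    field_simp
    linear_combination h
  have hΦ' : ∀ x, (s + σ) * deriv Φ x = -deriv (deriv U) x := by
    intro x
    rw [hfun, deriv_const_mul _ (hU2 x)]
    field_simp
  intro x
  have h2 := hΥ x
  have h3 := hwave x
  have h1 := hΦ' x
  have hs2 : (1 + σ / s) ≠ 0 := by
    field_simp
    intro h
    exact hsσ ((div_eq_zero_iff.mp h).resolve_right hs)
  have key : s ^ 2 * ((s + σ) ^ 2 * U x - deriv (deriv U) x) = 0 := by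
    linear_combination (s + σ)^2 * h3 + (s + σ) * h2 + (-σ^2 + 2*σ*(s+σ)) * h1
  have key2 := sub_eq_zero.mp ((mul_eq_zero.mp key).resolve_left (pow_ne_zero 2 hs))
  have h4 : (1 + σ / s) * s = s + σ := by
    rw [add_mul, div_mul_cancel₀ σ hs, one_mul]
  rw [eq_inv_mul_iff_mul_eq₀ (pow_ne_zero 2 hs2)]
  linear_combination key2 + ((1 + σ / s) * s + (s + σ)) * U x * h4
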